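/- Let μ be a probability distribution on ℝ^n and let W, W' be independent random vectors with distribution μ. Then the chi-squared divergence between the Gaussian location mixture N(0, I_n) ∗ μ and the standard Gaussian N(0, I_n) satisfies χ²(N(0,I_n) ∗ μ ‖ N(0,I_n)) ≤ E[exp(⟨W, W'⟩)] − 1. -/

import Mathlib

open MeasureTheory ProbabilityTheory Real ENNReal

lemma lintegral_pi_prod' {n : ℕ} (ν : Fin n → Measure ℝ) [∀ i, SigmaFinite (ν i)]
    (f : Fin n → ℝ → ℝ≥0∞) (hf : ∀ i, Measurable (f i)) :
    ∫⁻ x, ∏ i, f i (x i) ∂Measure.pi ν = ∏ i, ∫⁻ t, f i t ∂ν i := by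
  induction n with
  | zero => simp
  | succ n ih =>
    have h := (measurePreserving_piFinSuccAbove ν 0).symm
    rw [← h.lintegral_comp_emb
      (MeasurableEquiv.piFinSuccAbove (fun _ => ℝ) 0).symm.measurableEmbedding]
    simp_rw [MeasurableEquiv.piFinSuccAbove_symm_apply, Fin.insertNthEquiv, Equiv.coe_fn_mk,
      Fin.prod_univ_succ, Fin.insertNth_zero, Fin.zero_succAbove, Fin.cons_zero, Fin.cons_succ,
      cast_eq]
    have hg : Measurable fun y : Fin n → ℝ => ∏ x : Fin n, f x.succ (y x) :=
      Finset.measurable_prod _ fun i _ => (hf i.succ).comp (measurable_pi_apply i)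
    rw [lintegral_prod_mul (hf 0).aemeasurable hg.aemeasurable,
      ih (fun j => ν j.succ) (fun j => f j.succ) (fun j => hf j.succ)]

lemma gaussian_tilt (m : ℝ) :
    (gaussianReal 0 1).withDensity (fun t => ENNReal.ofReal (rexp (t * m - m ^ 2 / 2)))
      = gaussianReal m 1 := by
  rw [gaussianReal_of_var_ne_zero 0 one_ne_zero, gaussianReal_of_var_ne_zero m one_ne_zero,
    ← withDensity_mul _ (measurable_gaussianPDF 0 1)
      (by fun_prop : Measurable fun t : ℝ => ENNReal.ofReal (rexp (t * m - m ^ 2 / 2)))]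
  congr 1
  ext t
  simp only [Pi.mul_apply, gaussianPDF_def, ← ENNReal.ofReal_mul (gaussianPDFReal_nonneg 0 1 t)]
  congr 1
  simp only [gaussianPDFReal, NNReal.coe_one, mul_one, sub_zero, mul_assoc, ← Real.exp_add]
  norm_num
  ring_nf
  tauto

lemma gaussian_mgf (a : ℝ) :
    ∫⁻ t, ENNReal.ofReal (rexp (t * a)) ∂gaussianReal 0 1
      = ENNReal.ofReal (rexp (a ^ 2 / 2)) := by
  have h1 : ∫⁻ t, ENNReal.ofReal (rexp (t * a - a ^ 2 / 2)) ∂gaussianReal 0 1 = 1 := by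
    have := congrArg (fun m : Measure ℝ => m Set.univ) (gaussian_tilt a)
    simpa [withDensity_apply _ MeasurableSet.univ] using this
  have hsplit : ∀ t : ℝ, ENNReal.ofReal (rexp (t * a - a ^ 2 / 2))
      = ENNReal.ofReal (rexp (t * a)) * ENNReal.ofReal (rexp (-(a ^ 2 / 2))) := by
    intro t
    rw [← ENNReal.ofReal_mul (exp_nonneg _), ← Real.exp_add]
    ring_nf
  simp_rw [hsplit] at h1
  rw [lintegral_mul_const _ (by fun_prop)] at h1
  have hcd : ENNReal.ofReal (rexp (-(a ^ 2 / 2))) * ENNReal.ofReal (rexp (a ^ 2 / 2)) = 1 := by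
    rw [← ENNReal.ofReal_mul (exp_nonneg _), ← Real.exp_add]
    norm_num
  calc ∫⁻ t, ENNReal.ofReal (rexp (t * a)) ∂gaussianReal 0 1
      = (∫⁻ t, ENNReal.ofReal (rexp (t * a)) ∂gaussianReal 0 1)
        * (ENNReal.ofReal (rexp (-(a ^ 2 / 2))) * ENNReal.ofReal (rexp (a ^ 2 / 2))) := by
        rw [hcd, mul_one]
    _ = ENNReal.ofReal (rexp (a ^ 2 / 2)) := by rw [← mul_assoc, h1, one_mul]

lemma map_add_pi_gaussian {n : ℕ} (w : Fin n → ℝ) :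
    Measure.map (fun z => z + w) (Measure.pi fun _ : Fin n => gaussianReal 0 1)
      = (Measure.pi fun _ : Fin n => gaussianReal 0 1).withDensity
          (fun x => ∏ i, ENNReal.ofReal (rexp (x i * w i - w i ^ 2 / 2))) := by
  have hmeas : Measurable fun z : Fin n → ℝ => z + w := measurable_add_const w
  have h1 : Measure.map (fun z => z + w) (Measure.pi fun _ : Fin n => gaussianReal 0 1)
      = Measure.pi (fun i => gaussianReal (w i) 1) := by
    refine (Measure.pi_eq fun s hs => ?_).symm
    rw [Measure.map_apply hmeas (MeasurableSet.univ_pi hs)]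
    have hpre : (fun z : Fin n → ℝ => z + w) ⁻¹' Set.pi Set.univ s
        = Set.pi Set.univ fun i => (· + w i) ⁻¹' s i := by
      ext z; simp [Set.mem_univ_pi]
    rw [hpre, Measure.pi_pi]
    refine Finset.prod_congr rfl fun i _ => ?_
    rw [← Measure.map_apply (measurable_add_const (w i)) (hs i),
      gaussianReal_map_add_const (w i), zero_add]
  have h2 : (Measure.pi fun _ : Fin n => gaussianReal 0 1).withDensity
          (fun x => ∏ i, ENNReal.ofReal (rexp (x i * w i - w i ^ 2 / 2)))
      = Measure.pi (fun i => gaussianReal (w i) 1) := by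
    refine (Measure.pi_eq fun s hs => ?_).symm
    rw [withDensity_apply _ (MeasurableSet.univ_pi hs),
      ← lintegral_indicator (MeasurableSet.univ_pi hs)]
    have hind : ∀ x : Fin n → ℝ,
        (Set.pi Set.univ s).indicator
          (fun x => ∏ i, ENNReal.ofReal (rexp (x i * w i - w i ^ 2 / 2))) x
        = ∏ i, (s i).indicator (fun t => ENNReal.ofReal (rexp (t * w i - w i ^ 2 / 2))) (x i) := by
      intro x
      by_cases hx : x ∈ Set.pi Set.univ s
      · rw [Set.indicator_of_mem hx]
        exact (Finset.prod_congr rfl fun i _ =>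
          (Set.indicator_of_mem (hx i (Set.mem_univ i))
            (fun t => ENNReal.ofReal (rexp (t * w i - w i ^ 2 / 2)))).symm)
      · rw [Set.indicator_of_notMem hx]
        obtain ⟨i, hi⟩ : ∃ i, x i ∉ s i := by
          by_contra hcon
          push_neg at hcon
          exact hx fun i _ => hcon i
        exact (Finset.prod_eq_zero (Finset.mem_univ i)
          (Set.indicator_of_notMem hi _)).symm
    simp_rw [hind]
    rw [lintegral_pi_prod' _ (fun i => (s i).indicator
        (fun t => ENNReal.ofReal (rexp (t * w i - w i ^ 2 / 2))))
      (fun i => Measurable.indicator (by fun_prop) (hs i))]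
    refine Finset.prod_congr rfl fun i _ => ?_
    rw [lintegral_indicator (hs i), ← withDensity_apply _ (hs i), gaussian_tilt]
  rw [h1, ← h2]

lemma he_meas {n : ℕ} : Measurable (fun p : (Fin n → ℝ) × (Fin n → ℝ) =>
    ∏ i, ENNReal.ofReal (rexp (p.1 i * p.2 i - p.2 i ^ 2 / 2))) := by
  fun_prop

lemma mixture_eq_withDensity {n : ℕ} (μ : Measure (Fin n → ℝ)) [IsProbabilityMeasure μ] :
    Measure.map (fun pr : (Fin n → ℝ) × (Fin n → ℝ) => pr.1 + pr.2)
        ((Measure.pi fun _ : Fin n => gaussianReal 0 1).prod μ)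
      = (Measure.pi fun _ : Fin n => gaussianReal 0 1).withDensity
          (fun x => ∫⁻ w, ∏ i, ENNReal.ofReal (rexp (x i * w i - w i ^ 2 / 2)) ∂μ) := by
  set Q : Measure (Fin n → ℝ) := Measure.pi fun _ : Fin n => gaussianReal 0 1 with hQ
  have hadd : Measurable fun pr : (Fin n → ℝ) × (Fin n → ℝ) => pr.1 + pr.2 :=
    measurable_fst.add measurable_snd
  ext s hs
  rw [Measure.map_apply hadd hs, Measure.prod_apply_symm (hadd hs),
    withDensity_apply _ hs]
  have hfib : ∀ w : Fin n → ℝ,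
      Q ((fun z => (z, w)) ⁻¹' ((fun pr : (Fin n → ℝ) × (Fin n → ℝ) => pr.1 + pr.2) ⁻¹' s))
        = ∫⁻ z, s.indicator
            (fun x => ∏ i, ENNReal.ofReal (rexp (x i * w i - w i ^ 2 / 2))) z ∂Q := by
    intro w
    have : ((fun z => (z, w)) ⁻¹' ((fun pr : (Fin n → ℝ) × (Fin n → ℝ) => pr.1 + pr.2) ⁻¹' s))
        = (fun z => z + w) ⁻¹' s := rfl
    rw [this, ← Measure.map_apply (measurable_add_const w) hs, map_add_pi_gaussian w,
      withDensity_apply _ hs, ← lintegral_indicator hs]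
  simp_rw [hfib]
  rw [lintegral_lintegral_swap]
  · rw [← lintegral_indicator hs]
    refine lintegral_congr fun x => ?_
    by_cases hx : x ∈ s
    · simp only [Set.indicator_of_mem hx]
    · simp only [Set.indicator_of_notMem hx, lintegral_zero]
  · have : (Function.uncurry fun (w : Fin n → ℝ) (z : Fin n → ℝ) =>
        s.indicator (fun x => ∏ i, ENNReal.ofReal (rexp (x i * w i - w i ^ 2 / 2))) z)
        = Set.indicator {p : (Fin n → ℝ) × (Fin n → ℝ) | p.2 ∈ s}
            (fun p => ∏ i, ENNReal.ofReal (rexp (p.2 i * p.1 i - p.1 i ^ 2 / 2))) := by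
      ext p
      by_cases hp : p.2 ∈ s
      · simp [Function.uncurry, Set.indicator_of_mem hp,
          Set.indicator_of_mem (show p ∈ {p : (Fin n → ℝ) × (Fin n → ℝ) | p.2 ∈ s} from hp)]
      · simp [Function.uncurry, Set.indicator_of_notMem hp,
          Set.indicator_of_notMem (show p ∉ {p : (Fin n → ℝ) × (Fin n → ℝ) | p.2 ∈ s} from hp)]
    rw [this]
    exact ((he_meas.comp measurable_swap).indicator (measurable_snd hs)).aemeasurable

lemma key_lintegral {n : ℕ} (μ : Measure (Fin n → ℝ)) [IsProbabilityMeasure μ] :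
    ∫⁻ x, (∫⁻ w, ∏ i, ENNReal.ofReal (rexp (x i * w i - w i ^ 2 / 2)) ∂μ)
        * (∫⁻ w, ∏ i, ENNReal.ofReal (rexp (x i * w i - w i ^ 2 / 2)) ∂μ)
        ∂(Measure.pi fun _ : Fin n => gaussianReal 0 1)
      = ∫⁻ pr, ENNReal.ofReal (rexp (∑ i, pr.1 i * pr.2 i)) ∂(μ.prod μ) := by
  set Q : Measure (Fin n → ℝ) := Measure.pi fun _ : Fin n => gaussianReal 0 1 with hQ
  set E : (Fin n → ℝ) → (Fin n → ℝ) → ℝ≥0∞ :=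
    fun x w => ∏ i, ENNReal.ofReal (rexp (x i * w i - w i ^ 2 / 2)) with hE
  have hEmeas : ∀ x, Measurable (E x) := by
    intro x
    rw [hE]
    fun_prop
  have h1 : ∀ x, (∫⁻ w, E x w ∂μ) * (∫⁻ w, E x w ∂μ)
      = ∫⁻ pr, E x pr.1 * E x pr.2 ∂(μ.prod μ) := by
    intro x
    rw [lintegral_prod_mul (hEmeas x).aemeasurable (hEmeas x).aemeasurable]
  simp_rw [show ∀ x, (∫⁻ w, ∏ i, ENNReal.ofReal (rexp (x i * w i - w i ^ 2 / 2)) ∂μ)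
      * (∫⁻ w, ∏ i, ENNReal.ofReal (rexp (x i * w i - w i ^ 2 / 2)) ∂μ)
      = ∫⁻ pr, E x pr.1 * E x pr.2 ∂(μ.prod μ) from h1]
  rw [lintegral_lintegral_swap]
  · refine lintegral_congr fun pr => ?_
    obtain ⟨w, w'⟩ := pr
    have hfac : ∀ x : Fin n → ℝ, E x w * E x w'
        = ∏ i, (ENNReal.ofReal (rexp (x i * (w i + w' i)))
            * ENNReal.ofReal (rexp (-(w i ^ 2 + w' i ^ 2) / 2))) := by
      intro x
      rw [hE]
      simp only
      rw [← Finset.prod_mul_distrib]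
      refine Finset.prod_congr rfl fun i _ => ?_
      rw [← ENNReal.ofReal_mul (exp_nonneg _), ← ENNReal.ofReal_mul (exp_nonneg _),
        ← Real.exp_add, ← Real.exp_add]
      ring_nf
    simp_rw [hfac]
    rw [lintegral_pi_prod' _ (fun i t => ENNReal.ofReal (rexp (t * (w i + w' i)))
        * ENNReal.ofReal (rexp (-(w i ^ 2 + w' i ^ 2) / 2))) (fun i => by fun_prop)]
    have hfac2 : ∀ i : Fin n,
        ∫⁻ t, ENNReal.ofReal (rexp (t * (w i + w' i)))
            * ENNReal.ofReal (rexp (-(w i ^ 2 + w' i ^ 2) / 2)) ∂gaussianReal 0 1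
          = ENNReal.ofReal (rexp (w i * w' i)) := by
      intro i
      rw [lintegral_mul_const _ (by fun_prop), gaussian_mgf,
        ← ENNReal.ofReal_mul (exp_nonneg _), ← Real.exp_add]
      congr 2
      ring
    simp_rw [hfac2]
    rw [← ENNReal.ofReal_prod_of_nonneg (fun i _ => exp_nonneg _), ← Real.exp_sum]
  · have : (Function.uncurry fun (x : Fin n → ℝ) (pr : (Fin n → ℝ) × (Fin n → ℝ)) =>
        E x pr.1 * E x pr.2)
        = fun p : (Fin n → ℝ) × ((Fin n → ℝ) × (Fin n → ℝ)) =>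
            E p.1 p.2.1 * E p.1 p.2.2 := rfl
    rw [this]
    exact ((he_meas.comp (measurable_fst.prodMk (measurable_fst.comp measurable_snd))).mul
      (he_meas.comp (measurable_fst.prodMk (measurable_snd.comp measurable_snd)))).aemeasurable

/-- Let `μ` be a probability distribution on `ℝⁿ` and `W, W'` independent with law `μ`.
Then `χ²(N(0,Iₙ) ∗ μ ‖ N(0,Iₙ)) ≤ E[exp(⟨W,W'⟩)] − 1`, where `N(0,Iₙ) ∗ μ` is the law of
`Z + W` with `Z ∼ N(0,Iₙ)` independent of `W`, and
`χ²(P‖Q) = ∫ (dP/dQ)² dQ − 1`. -/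
theorem chiSq_gaussian_mixture_le {n : ℕ} (μ : Measure (Fin n → ℝ))
    [IsProbabilityMeasure μ] :
    (∫ x, (((Measure.map (fun pr : (Fin n → ℝ) × (Fin n → ℝ) => pr.1 + pr.2)
            ((Measure.pi fun _ : Fin n => gaussianReal 0 1).prod μ)).rnDeriv
          (Measure.pi fun _ : Fin n => gaussianReal 0 1) x).toReal) ^ 2
        ∂(Measure.pi fun _ : Fin n => gaussianReal 0 1)) - 1
      ≤ (∫ pr, Real.exp (∑ i, pr.1 i * pr.2 i) ∂(μ.prod μ)) - 1 := by
  set Q : Measure (Fin n → ℝ) := Measure.pi fun _ : Fin n => gaussianReal 0 1 with hQ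
  set P : Measure (Fin n → ℝ) := Measure.map
    (fun pr : (Fin n → ℝ) × (Fin n → ℝ) => pr.1 + pr.2) (Q.prod μ) with hP
  set f : (Fin n → ℝ) → ℝ≥0∞ :=
    fun x => ∫⁻ w, ∏ i, ENNReal.ofReal (rexp (x i * w i - w i ^ 2 / 2)) ∂μ with hf
  have hadd : Measurable fun pr : (Fin n → ℝ) × (Fin n → ℝ) => pr.1 + pr.2 :=
    measurable_fst.add measurable_snd
  have hfmeas : Measurable f := he_meas.lintegral_prod_right'
  have hPprob : IsProbabilityMeasure P := Measure.isProbabilityMeasure_map hadd.aemeasurable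
  have hrn : P.rnDeriv Q =ᵐ[Q] f := by
    rw [hP, mixture_eq_withDensity μ]
    exact Measure.rnDeriv_withDensity Q hfmeas
  have hlt : ∀ᵐ x ∂Q, P.rnDeriv Q x < ⊤ := Measure.rnDeriv_lt_top P Q
  have hL : ∫ x, ((P.rnDeriv Q x).toReal) ^ 2 ∂Q
      = (∫⁻ x, ENNReal.ofReal (((P.rnDeriv Q x).toReal) ^ 2) ∂Q).toReal := by
    refine integral_eq_lintegral_of_nonneg_ae (ae_of_all _ fun x => sq_nonneg _) ?_
    exact ((Measure.measurable_rnDeriv P Q).ennreal_toReal.pow_const 2).aestronglyMeasurable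
  have hLeq : ∫⁻ x, ENNReal.ofReal (((P.rnDeriv Q x).toReal) ^ 2) ∂Q
      = ∫⁻ x, f x * f x ∂Q := by
    refine lintegral_congr_ae ?_
    filter_upwards [hrn, hlt] with x hx hx'
    rw [← hx, ← ENNReal.toReal_pow, ENNReal.ofReal_toReal (by
      exact ENNReal.pow_ne_top hx'.ne), pow_two]
  have hR : ∫ pr, Real.exp (∑ i, pr.1 i * pr.2 i) ∂(μ.prod μ)
      = (∫⁻ pr, ENNReal.ofReal (rexp (∑ i, pr.1 i * pr.2 i)) ∂(μ.prod μ)).toReal := by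
    refine integral_eq_lintegral_of_nonneg_ae (ae_of_all _ fun pr => exp_nonneg _) ?_
    exact (Measurable.aestronglyMeasurable (by fun_prop))
  have := key_lintegral μ
  refine sub_le_sub_right (le_of_eq ?_) 1
  rw [hL, hLeq, hR, ← this]
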